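/- arXiv:2504.04876 — 6 statements merged into one kernel-verified Lean document; each statement's English description precedes it below -/
import Mathlib

section
/- An abelian group G is hereditarily co-Bassian (every subgroup of G is co-Bassian) if and only if G is a torsion group and, for each prime p, the p-primary component T_p of G is finitely cogenerated, i.e., T_p[p] = {x ∈ T_p : p·x = 0} is finite. -/
open scoped TensorProduct DirectSum

/-- An abelian group is divisible if every element is divisible by every positive integer. -/
def IsDivisibleGrp (G : Type*) [AddCommGroup G] : Prop :=
  ∀ n : ℕ, 0 < n → ∀ d : G, ∃ x : G, n • x = d

/-- An abelian group `G` is co-Bassian if for every subgroup `N`, every injective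
homomorphism `G → G/N` is surjective. -/
def IsCoBassian (G : Type*) [AddCommGroup G] : Prop :=
  ∀ N : AddSubgroup G, ∀ φ : G →+ G ⧸ N, Function.Injective φ → Function.Surjective φ

/-- A subgroup `A` of an abelian group is a direct summand if it has a complement. -/
def IsDirectSummand {G : Type*} [AddCommGroup G] (A : AddSubgroup G) : Prop :=
  ∃ C : AddSubgroup G, A ⊔ C = ⊤ ∧ A ⊓ C = ⊥

/-- An abelian group `G` is generalized co-Bassian if for every subgroup `N` and every
injective homomorphism `φ : G → G/N`, the image of `φ` is a direct summand of `G/N`. -/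
def IsGenCoBassian (G : Type*) [AddCommGroup G] : Prop :=
  ∀ N : AddSubgroup G, ∀ φ : G →+ G ⧸ N, Function.Injective φ → IsDirectSummand φ.range




/-- multiplication by `m` as an `AddMonoidHom`. -/
def smulHom (X : Type*) [AddCommGroup X] (m : ℕ) : X →+ X where
  toFun x := m • x
  map_zero' := smul_zero m
  map_add' a b := smul_add m a b

@[simp] lemma smulHom_apply {X : Type*} [AddCommGroup X] (m : ℕ) (x : X) :
    smulHom X m x = m • x := rfl

lemma finite_quot_card_le {X : Type*} [AddCommGroup X] [Finite X] (Y : AddSubgroup X) (m : ℕ) :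
    Nat.card {q : X ⧸ Y // m • q = 0} ≤ Nat.card {x : X // m • x = 0} := by
  classical
  set f : X →+ X := smulHom X m with hf
  set C : AddSubgroup X := Y.comap f with hC
  have hYC : Y ≤ C := by
    intro y hy
    simp only [hC, AddSubgroup.mem_comap, hf, smulHom_apply]
    exact AddSubgroup.nsmul_mem Y hy m
  haveI : Finite (X ⧸ Y) := Quotient.finite _
  set g : (X ⧸ Y) →+ (X ⧸ Y) := smulHom (X ⧸ Y) m with hg
  have hmem : ∀ x : C, QuotientAddGroup.mk' Y (x : X) ∈ g.ker := by
    intro x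
    have h2 : (m : ℕ) • ((x : X) : X ⧸ Y) = ((m • (x : X) : X) : X ⧸ Y) := by simp
    simp only [AddMonoidHom.mem_ker, hg, smulHom_apply, QuotientAddGroup.mk'_apply]
    rw [h2, QuotientAddGroup.eq_zero_iff]
    exact x.2
  set ψ : C →+ g.ker :=
    AddMonoidHom.codRestrict ((QuotientAddGroup.mk' Y).comp C.subtype) g.ker hmem with hψ
  have hsurj : Function.Surjective ψ := by
    rintro ⟨q, hq⟩
    induction q using QuotientAddGroup.induction_on with
    | H x =>
      have hx : x ∈ C := by
        simp only [AddMonoidHom.mem_ker, hg, smulHom_apply] at hq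
        have h3 : ((m • x : X) : X ⧸ Y) = 0 := by rw [← hq]; simp
        rw [QuotientAddGroup.eq_zero_iff] at h3
        simp only [hC, AddSubgroup.mem_comap, hf, smulHom_apply]
        exact h3
      exact ⟨⟨x, hx⟩, rfl⟩
  have hkerψ : ∀ x : C, x ∈ ψ.ker ↔ (x : X) ∈ Y := by
    intro x
    simp only [hψ, AddMonoidHom.mem_ker]
    rw [Subtype.ext_iff]
    exact QuotientAddGroup.eq_zero_iff (N := Y) (x : X)
  have hkerψ' : ψ.ker = Y.addSubgroupOf C := by
    ext x; rw [hkerψ, AddSubgroup.mem_addSubgroupOf]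
  have cardkerψ : Nat.card ψ.ker = Nat.card Y := by
    rw [hkerψ']
    exact Nat.card_congr (AddSubgroup.addSubgroupOfEquivOfLe hYC).toEquiv
  have eq1 : Nat.card g.ker * Nat.card Y = Nat.card C := by
    rw [← cardkerψ, ← Nat.card_congr (QuotientAddGroup.quotientKerEquivOfSurjective ψ hsurj).toEquiv]
    exact (AddSubgroup.card_eq_card_quotient_mul_card_addSubgroup ψ.ker).symm
  have hfC : ∀ x : C, f (x : X) ∈ Y := by
    intro x; exact AddSubgroup.mem_comap.mp ((le_of_eq hC) x.2)
  set f' : C →+ Y := AddMonoidHom.codRestrict (f.comp C.subtype) Y hfC with hf'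
  have eq2 : Nat.card C = Nat.card f'.range * Nat.card f'.ker := by
    rw [← Nat.card_congr (QuotientAddGroup.quotientKerEquivRange f').toEquiv]
    exact AddSubgroup.card_eq_card_quotient_mul_card_addSubgroup f'.ker
  have le1 : Nat.card f'.range ≤ Nat.card Y :=
    Nat.card_le_card_of_injective _ Subtype.val_injective
  have le2 : Nat.card f'.ker ≤ Nat.card f.ker := by
    apply Nat.card_le_card_of_injective
      (fun x : f'.ker => (⟨(x : C), by
        have h4 := x.2
        simp only [hf', AddMonoidHom.mem_ker, Subtype.ext_iff] at h4 ⊢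
        exact h4⟩ : f.ker))
    intro a b hab
    have h1 := congrArg Subtype.val hab
    exact Subtype.ext (Subtype.ext h1)
  have hYpos : 0 < Nat.card Y := Nat.card_pos
  have key : Nat.card g.ker * Nat.card Y ≤ Nat.card f.ker * Nat.card Y := by
    rw [eq1, eq2]
    calc Nat.card f'.range * Nat.card f'.ker ≤ Nat.card Y * Nat.card f.ker :=
          Nat.mul_le_mul le1 le2
      _ = Nat.card f.ker * Nat.card Y := Nat.mul_comm _ _
  have main : Nat.card g.ker ≤ Nat.card f.ker := Nat.le_of_mul_le_mul_right key hYpos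
  have e1 : Nat.card {q : X ⧸ Y // m • q = 0} = Nat.card g.ker :=
    Nat.card_congr (Equiv.subtypeEquivRight (fun q => by
      simp [AddMonoidHom.mem_ker, hg]))
  have e2 : Nat.card {x : X // m • x = 0} = Nat.card f.ker :=
    Nat.card_congr (Equiv.subtypeEquivRight (fun x => by
      simp [AddMonoidHom.mem_ker, hf]))
  rw [e1, e2]; exact main

lemma closure_finite_of_torsion {A : Type*} [AddCommGroup A] (S : Finset A)
    (hS : ∀ x ∈ S, IsOfFinAddOrder x) :
    ((AddSubgroup.closure (S : Set A)) : Set A).Finite := by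
  classical
  induction S using Finset.induction_on with
  | empty => simp [AddSubgroup.closure_empty]
  | @insert a S ha ih =>
    have haf : IsOfFinAddOrder a := hS a (Finset.mem_insert_self a S)
    have hSf : ∀ x ∈ S, IsOfFinAddOrder x := fun x hx => hS x (Finset.mem_insert_of_mem hx)
    have h1 : ((insert a S : Finset A) : Set A) = {a} ∪ (S : Set A) := by
      rw [Finset.coe_insert, Set.insert_eq]
    rw [h1, AddSubgroup.closure_union]
    have h2 : AddSubgroup.closure ({a} : Set A) = AddSubgroup.zmultiples a :=
      (AddSubgroup.zmultiples_eq_closure a).symm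
    rw [h2]
    rw [AddSubgroup.add_normal]
    exact Set.Finite.add haf.finite_zmultiples (ih hSf)

lemma quot_card_le_core {A : Type*} [AddCommGroup A]
    (tors : ∀ x : A, IsOfFinAddOrder x) (m : ℕ) (B : AddSubgroup A)
    (hfin : {x : A | m • x = 0}.Finite)
    (S : Finset (A ⧸ B)) (hS : ∀ y ∈ S, m • y = 0) :
    S.card ≤ Nat.card {x : A // m • x = 0} := by
  classical
  set T : Finset A := S.image Quotient.out with hT
  set F : AddSubgroup A := AddSubgroup.closure (T : Set A) with hF
  have hFfin : ((F : Set A)).Finite := closure_finite_of_torsion T (fun x _ => tors x)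
  haveI : Finite F := hFfin.to_subtype
  set Y : AddSubgroup F := B.addSubgroupOf F with hY
  -- the map S → {q' : F ⧸ Y // m • q' = 0}
  have hmemT : ∀ y ∈ S, (Quotient.out y : A) ∈ F := by
    intro y hy
    refine AddSubgroup.subset_closure ?_
    rw [hT]
    rw [Finset.coe_image, Set.mem_image]
    exact ⟨y, by simpa using hy, rfl⟩
  have hout : ∀ y : A ⧸ B, ((Quotient.out y : A) : A ⧸ B) = y := fun y =>
    QuotientAddGroup.out_eq' y
  set θ : ∀ y ∈ S, F ⧸ Y := fun y hy =>
    (QuotientAddGroup.mk (⟨Quotient.out y, hmemT y hy⟩ : F) : F ⧸ Y) with hθ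
  have hθtor : ∀ y (hy : y ∈ S), m • θ y hy = 0 := by
    intro y hy
    have h1 : m • y = 0 := hS y hy
    have h2 : ((m • Quotient.out y : A) : A ⧸ B) = 0 := by
      push_cast [hout]
      rw [← h1]
      simp
    rw [QuotientAddGroup.eq_zero_iff] at h2
    have : m • (⟨Quotient.out y, hmemT y hy⟩ : F) ∈ Y := by
      rw [hY, AddSubgroup.mem_addSubgroupOf]
      simpa using h2
    rw [hθ]
    have h3 : m • (QuotientAddGroup.mk (⟨Quotient.out y, hmemT y hy⟩ : F) : F ⧸ Y)
        = (QuotientAddGroup.mk (m • (⟨Quotient.out y, hmemT y hy⟩ : F)) : F ⧸ Y) :=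
      (map_nsmul (QuotientAddGroup.mk' Y) m _).symm
    rw [h3, QuotientAddGroup.eq_zero_iff]
    exact this
  -- injectivity
  have hinj : ∀ y (hy : y ∈ S) y' (hy' : y' ∈ S), θ y hy = θ y' hy' → y = y' := by
    intro y hy y' hy' h
    rw [hθ, QuotientAddGroup.eq] at h
    have hB : -(Quotient.out y) + Quotient.out y' ∈ B := by
      rw [hY, AddSubgroup.mem_addSubgroupOf] at h
      simpa using h
    have : ((Quotient.out y : A) : A ⧸ B) = ((Quotient.out y' : A) : A ⧸ B) :=
      (QuotientAddGroup.eq).mpr hB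
    rwa [hout, hout] at this
  -- counting
  haveI : Finite (F ⧸ Y) := Quotient.finite _
  haveI : Finite {x : A | m • x = 0} := hfin.to_subtype
  have step1 : S.card = Nat.card (↑(S : Set (A ⧸ B)) : Type _) := by
    rw [Nat.card_coe_set_eq, Set.ncard_coe_finset]
  have step2 : Nat.card (↑(S : Set (A ⧸ B)) : Type _)
      ≤ Nat.card {q' : F ⧸ Y // m • q' = 0} := by
    apply Nat.card_le_card_of_injective
      (fun y => (⟨θ y.1 (Finset.mem_coe.mp y.2), hθtor y.1 (Finset.mem_coe.mp y.2)⟩ :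
        {q' : F ⧸ Y // m • q' = 0}))
    intro a b hab
    have := congrArg Subtype.val hab
    exact Subtype.ext (hinj a.1 (Finset.mem_coe.mp a.2) b.1 (Finset.mem_coe.mp b.2) this)
  have step3 : Nat.card {q' : F ⧸ Y // m • q' = 0} ≤ Nat.card {x : F // m • x = 0} :=
    finite_quot_card_le Y m
  have step4 : Nat.card {x : F // m • x = 0} ≤ Nat.card {x : A // m • x = 0} := by
    apply Nat.card_le_card_of_injective
      (fun x : {x : F // m • x = 0} => (⟨((x : F) : A), by
        have hx := x.2
        have : ((m • (x : F) : F) : A) = m • ((x : F) : A) := by push_cast; rfl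
        rw [Set.mem_setOf_eq, ← this, hx]
        rfl⟩ : {x : A | m • x = 0}))
    intro a b hab
    have := congrArg Subtype.val hab
    exact Subtype.ext (Subtype.ext this)
  omega

lemma quot_finite_and_card_le {A : Type*} [AddCommGroup A]
    (tors : ∀ x : A, IsOfFinAddOrder x) (m : ℕ) (B : AddSubgroup A)
    (hfin : {x : A | m • x = 0}.Finite) :
    {q : A ⧸ B | m • q = 0}.Finite ∧
      Nat.card {q : A ⧸ B // m • q = 0} ≤ Nat.card {x : A // m • x = 0} := by
  classical
  set k := Nat.card {x : A // m • x = 0} with hk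
  have key : ∀ S : Finset (A ⧸ B), (∀ y ∈ S, m • y = 0) → S.card ≤ k :=
    fun S hS => quot_card_le_core tors m B hfin S hS
  have hfinQ : {q : A ⧸ B | m • q = 0}.Finite := by
    by_contra h
    have hinf : {q : A ⧸ B | m • q = 0}.Infinite := h
    obtain ⟨t, hts, htc⟩ := hinf.exists_subset_card_eq (k + 1)
    have := key t (fun y hy => hts (Finset.mem_coe.mpr hy))
    omega
  refine ⟨hfinQ, ?_⟩
  have e1 : Nat.card {q : A ⧸ B // m • q = 0} = hfinQ.toFinset.card := by
    show Nat.card ↑{q : A ⧸ B | m • q = 0} = _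
    rw [Nat.card_coe_set_eq, Set.ncard_eq_toFinset_card _ hfinQ]
  rw [e1]
  exact key hfinQ.toFinset (fun y hy => (Set.Finite.mem_toFinset hfinQ).mp hy)

lemma isCoBassian_of_torsion_finite {A : Type*} [AddCommGroup A]
    (tors : ∀ x : A, IsOfFinAddOrder x)
    (hfin : ∀ m : ℕ, 0 < m → {x : A | m • x = 0}.Finite) : IsCoBassian A := by
  intro N φ hinj y
  obtain ⟨a, ha⟩ : ∃ a : A, ((a : A ⧸ N)) = y := QuotientAddGroup.mk_surjective y
  obtain ⟨m, hm, hma⟩ := isOfFinAddOrder_iff_nsmul_eq_zero.mp (tors a)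
  have hy : m • y = 0 := by
    rw [← ha]
    have : m • ((a : A ⧸ N)) = ((m • a : A) : A ⧸ N) := by simp
    rw [this, hma]
    simp
  set sA : Set A := {x : A | m • x = 0} with hsA
  set sQ : Set (A ⧸ N) := {q : A ⧸ N | m • q = 0} with hsQ
  obtain ⟨hQfin, hle⟩ := quot_finite_and_card_le tors m N (hfin m hm)
  have hle' : sQ.ncard ≤ sA.ncard := by
    have e1 : Nat.card {q : A ⧸ N // m • q = 0} = sQ.ncard := by
      show Nat.card ↑sQ = _; rw [Nat.card_coe_set_eq]
    have e2 : Nat.card {x : A // m • x = 0} = sA.ncard := by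
      show Nat.card ↑sA = _; rw [Nat.card_coe_set_eq]
    rw [e1, e2] at hle; exact hle
  have himg : φ '' sA ⊆ sQ := by
    rintro q ⟨x, hx, rfl⟩
    have : m • φ x = φ (m • x) := (map_nsmul φ m x).symm
    rw [hsQ, Set.mem_setOf_eq, this, hx]
    exact map_zero φ
  have hcard : sQ.ncard ≤ (φ '' sA).ncard := by
    rw [Set.ncard_image_of_injective sA hinj]; exact hle'
  have heq : φ '' sA = sQ := Set.eq_of_subset_of_ncard_le himg hcard hQfin
  have hy' : y ∈ φ '' sA := heq ▸ hy
  obtain ⟨x, _, hx⟩ := hy'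
  exact ⟨x, hx⟩

lemma mk'_bot_injective {V : Type*} [AddCommGroup V] :
    Function.Injective (QuotientAddGroup.mk' (⊥ : AddSubgroup V)) :=
  (QuotientAddGroup.mk' (⊥ : AddSubgroup V)).ker_eq_bot_iff.mp
    (QuotientAddGroup.ker_mk' ⊥)

lemma torsion_of_hered {G : Type*} [AddCommGroup G]
    (h : ∀ H : AddSubgroup G, IsCoBassian H) : ∀ x : G, IsOfFinAddOrder x := by
  intro x
  by_contra hx
  set H : AddSubgroup G := AddSubgroup.zmultiples x with hH
  set f : H →+ H := smulHom H 2 with hf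
  have hfinj : Function.Injective f := by
    intro a b hab
    have h1 : (2 : ℕ) • (a - b) = 0 := by
      have : (2:ℕ) • a = (2:ℕ) • b := hab
      rw [smul_sub, this, sub_self]
    obtain ⟨k, hk⟩ := AddSubgroup.mem_zmultiples_iff.mp ((a - b).2)
    have h2 : ((2 * k : ℤ)) • x = 0 := by
      have h3 : ((2:ℕ) • (a - b) : H) = (0 : H) := h1
      have h4 : ((2:ℕ) • ((a - b : H) : G)) = 0 := by
        rw [← AddSubgroup.coe_nsmul, h3, AddSubgroup.coe_zero]
      have h5 : ((2:ℕ) : ℤ) • ((a - b : H) : G) = (2:ℕ) • ((a - b : H) : G) :=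
        natCast_zsmul _ 2
      rw [mul_smul, hk, show (2:ℤ) = ((2:ℕ):ℤ) by norm_num, h5, h4]
    by_cases hk0 : k = 0
    · have : ((a - b : H) : G) = 0 := by rw [← hk, hk0, zero_smul]
      have : a - b = 0 := Subtype.ext this
      exact sub_eq_zero.mp this
    · exact absurd (isOfFinAddOrder_iff_zsmul_eq_zero.mpr ⟨2 * k, by
        simp [hk0], h2⟩) hx
  set φ : H →+ (H ⧸ (⊥ : AddSubgroup H)) :=
    (QuotientAddGroup.mk' (⊥ : AddSubgroup H)).comp f with hφ
  have hφinj : Function.Injective φ := mk'_bot_injective.comp hfinj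
  obtain ⟨a, ha⟩ := h H ⊥ φ hφinj
    ((QuotientAddGroup.mk' (⊥ : AddSubgroup H)) ⟨x, AddSubgroup.mem_zmultiples x⟩)
  have h6 : f a = ⟨x, AddSubgroup.mem_zmultiples x⟩ := mk'_bot_injective ha
  obtain ⟨k, hk⟩ := AddSubgroup.mem_zmultiples_iff.mp a.2
  have h7 : (2:ℕ) • (a : G) = x := by
    have := congrArg (Subtype.val) h6
    simpa [hf] using this
  have h8 : ((2 * k - 1 : ℤ)) • x = 0 := by
    have h9 : ((2 * k : ℤ)) • x = x := by
      have h5 : ((2:ℕ) : ℤ) • ((a : H) : G) = (2:ℕ) • ((a : H) : G) := natCast_zsmul _ 2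
      rw [mul_smul, hk, show (2:ℤ) = ((2:ℕ):ℤ) by norm_num, h5, h7]
    rw [sub_smul, h9, one_smul, sub_self]
  exact hx (isOfFinAddOrder_iff_zsmul_eq_zero.mpr ⟨2 * k - 1, by omega, h8⟩)

-- an injective non-surjective self-map of an infinite type
lemma exists_shift (ι : Type*) [Infinite ι] :
    ∃ f : ι → ι, Function.Injective f ∧ ∃ i₀, i₀ ∉ Set.range f := by
  classical
  let g := Infinite.natEmbedding ι
  refine ⟨fun a => if h : ∃ n, g n = a then g (h.choose + 1) else a, ?_, g 0, ?_⟩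
  · intro a b hab
    by_cases ha : ∃ n, g n = a <;> by_cases hb : ∃ n, g n = b
    · simp only [dif_pos ha, dif_pos hb] at hab
      have h2 : ha.choose = hb.choose := by
        have := g.injective hab
        omega
      rw [← ha.choose_spec, ← hb.choose_spec, h2]
    · simp only [dif_pos ha, dif_neg hb] at hab
      exact absurd ⟨_, hab⟩ hb
    · simp only [dif_neg ha, dif_pos hb] at hab
      exact absurd ⟨_, hab.symm⟩ ha
    · simpa [dif_neg ha, dif_neg hb] using hab
  · rintro ⟨a, ha⟩
    by_cases h : ∃ n, g n = a
    · simp only [dif_pos h] at ha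
      exact Nat.succ_ne_zero _ (g.injective ha)
    · simp only [dif_neg h] at ha
      exact h ⟨0, ha.symm⟩


lemma not_isCoBassian_infinite_vector_space {K V : Type*} [DivisionRing K] [Finite K]
    [AddCommGroup V] [Module K V] [Infinite V] : ¬ IsCoBassian V := by
  classical
  intro hco
  set b := Module.Basis.ofVectorSpace K V with hb
  haveI : Infinite (Module.Basis.ofVectorSpaceIndex K V) := by
    by_contra hfι
    haveI : Finite (Module.Basis.ofVectorSpaceIndex K V) := not_infinite_iff_finite.mp hfι
    haveI : Finite ((Module.Basis.ofVectorSpaceIndex K V) →₀ K) :=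
      Finite.of_injective (fun l => (l : (Module.Basis.ofVectorSpaceIndex K V) → K))
        (fun a b hab => Finsupp.ext (fun i => congrFun hab i))
    haveI : Finite V := Finite.of_injective ⇑b.repr b.repr.injective
    exact not_finite V
  obtain ⟨f, hfinj, i₀, hi₀⟩ := exists_shift (Module.Basis.ofVectorSpaceIndex K V)
  set σ : V →ₗ[K] V :=
    (b.repr.symm.toLinearMap.comp (Finsupp.lmapDomain K K f)).comp
      b.repr.toLinearMap with hσ
  have hσinj : Function.Injective (fun v : V => σ v) := by
    intro u w huw
    simp only [hσ, LinearMap.comp_apply, LinearEquiv.coe_toLinearMap,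
      Finsupp.lmapDomain_apply] at huw
    have h1 := b.repr.symm.injective huw
    have h2 := Finsupp.mapDomain_injective hfinj h1
    exact b.repr.injective h2
  set φ : V →+ (V ⧸ (⊥ : AddSubgroup V)) :=
    (QuotientAddGroup.mk' (⊥ : AddSubgroup V)).comp σ.toAddMonoidHom with hφ
  have hφinj : Function.Injective φ := by
    intro u w huw
    exact hσinj (mk'_bot_injective huw)
  have hφsurj := hco ⊥ φ hφinj
  have hσsurj : Function.Surjective (fun v : V => σ v) := by
    intro w
    obtain ⟨a, ha⟩ := hφsurj ((QuotientAddGroup.mk' (⊥ : AddSubgroup V)) w)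
    exact ⟨a, mk'_bot_injective ha⟩
  obtain ⟨v, hv⟩ := hσsurj (b.repr.symm (Finsupp.single i₀ 1))
  have hmap : Finsupp.mapDomain f (b.repr v) = Finsupp.single i₀ 1 := by
    have h3 := congrArg b.repr hv
    simp only [hσ, LinearMap.comp_apply, LinearEquiv.coe_toLinearMap,
      LinearEquiv.apply_symm_apply, Finsupp.lmapDomain_apply] at h3
    exact h3
  have h0 : (Finsupp.mapDomain f (b.repr v)) i₀ = 0 :=
    Finsupp.mapDomain_notin_range _ _ hi₀
  rw [hmap, Finsupp.single_eq_same] at h0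
  exact one_ne_zero h0


lemma socle_finite_of_hered {G : Type*} [AddCommGroup G]
    (h : ∀ H : AddSubgroup G, IsCoBassian H) (p : ℕ) [hp : Fact p.Prime] :
    {x : G | p • x = 0}.Finite := by
  classical
  by_contra hinf
  have hinf' : {x : G | p • x = 0}.Infinite := hinf
  set V : AddSubgroup G := (smulHom G p).ker with hV
  have hmemV : ∀ x : G, x ∈ V ↔ p • x = 0 := by
    intro x; rw [hV, AddMonoidHom.mem_ker]; rfl
  haveI : Infinite V := by
    have h1 : Infinite ↥{x : G | p • x = 0} := Set.infinite_coe_iff.mpr hinf'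
    exact Infinite.of_injective (fun y : ↥{x : G | p • x = 0} =>
      (⟨y.1, (hmemV y.1).mpr y.2⟩ : V))
      (fun a b hab => Subtype.ext (congrArg Subtype.val hab))
  haveI : NeZero p := ⟨hp.out.ne_zero⟩
  letI : Module (ZMod p) V := AddCommGroup.zmodModule (by
    intro x
    apply Subtype.ext
    rw [AddSubgroup.coe_nsmul, (hmemV x.1).mp x.2]
    rfl)
  exact not_isCoBassian_infinite_vector_space (K := ZMod p) (h V)

lemma primary_set_eq {G : Type*} [AddCommGroup G] (p : ℕ) [hp : Fact p.Prime] :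
    {x : G | x ∈ AddCommGroup.primaryComponent G p ∧ p • x = 0} = {x : G | p • x = 0} := by
  ext x
  simp only [Set.mem_setOf_eq, and_iff_right_iff_imp]
  intro hx
  have hdvd : addOrderOf x ∣ p := addOrderOf_dvd_of_nsmul_eq_zero hx
  rcases (Nat.Prime.eq_one_or_self_of_dvd hp.out _ hdvd) with h1 | h1
  · exact ⟨0, by rw [pow_zero, ← h1]; exact addOrderOf_nsmul_eq_zero x⟩
  · exact ⟨1, by rw [pow_one]; exact hx⟩

lemma torsion_finite_all {G : Type*} [AddCommGroup G]
    (hp : ∀ (p : ℕ) [Fact p.Prime], {x : G | p • x = 0}.Finite) :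
    ∀ m : ℕ, 0 < m → {x : G | m • x = 0}.Finite := by
  intro m
  induction m using Nat.strong_induction_on with
  | _ m IH =>
    intro hm
    rcases eq_or_lt_of_le (show 1 ≤ m from hm) with h1 | h1
    · have : m = 1 := h1.symm
      subst this
      have : {x : G | (1:ℕ) • x = 0} = {(0 : G)} := by
        ext x; simp
      rw [this]; exact Set.finite_singleton 0
    · -- m ≥ 2
      have hm1 : m ≠ 1 := by omega
      set q := m.minFac with hq
      haveI : Fact q.Prime := ⟨Nat.minFac_prime hm1⟩
      have hqdvd : q ∣ m := Nat.minFac_dvd m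
      have hq2 : 2 ≤ q := (Nat.minFac_prime hm1).two_le
      have hmq : m / q < m := Nat.div_lt_self (by omega) (by omega)
      have hmqpos : 0 < m / q := Nat.div_pos (Nat.le_of_dvd (by omega) hqdvd) (by omega)
      have ht : {y : G | (m / q) • y = 0}.Finite := IH (m / q) hmq hmqpos
      have hqfin : {z : G | q • z = 0}.Finite := hp q
      have hsub : {x : G | m • x = 0} ⊆
          ⋃ y ∈ {y : G | (m / q) • y = 0}, {x : G | q • x = y} := by
        intro x hx
        simp only [Set.mem_iUnion, Set.mem_setOf_eq, exists_prop]
        refine ⟨q • x, ?_, rfl⟩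
        have hx' : m • x = 0 := hx
        rw [smul_smul, Nat.div_mul_cancel hqdvd]
        exact hx'
      refine Set.Finite.subset (Set.Finite.biUnion ht ?_) hsub
      intro y hy
      by_cases hne : ({x : G | q • x = y}).Nonempty
      · obtain ⟨x₀, hx₀⟩ := hne
        have : {x : G | q • x = y} ⊆ (fun z => x₀ + z) '' {z : G | q • z = 0} := by
          intro x hx
          refine ⟨x - x₀, ?_, by ring_nf; abel⟩
          simp only [Set.mem_setOf_eq, smul_sub]
          rw [hx, hx₀, sub_self]
        exact Set.Finite.subset (Set.Finite.image _ hqfin) this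
      · rw [Set.not_nonempty_iff_eq_empty] at hne
        rw [hne]; exact Set.finite_empty

/-- `G` is hereditarily co-Bassian iff `G` is torsion and each primary
component `T_p` is finitely cogenerated, i.e. `T_p[p]` is finite. -/
theorem hereditarilyCoBassian_iff (G : Type*) [AddCommGroup G] :
    (∀ H : AddSubgroup G, IsCoBassian H) ↔
      (AddMonoid.IsTorsion G ∧
        ∀ (p : ℕ) [Fact p.Prime],
          {x : G | x ∈ AddCommGroup.primaryComponent G p ∧ p • x = 0}.Finite) := by
  constructor
  · intro h
    refine ⟨fun x => torsion_of_hered h x, ?_⟩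
    intro p hp
    rw [primary_set_eq p]
    exact socle_finite_of_hered h p
  · rintro ⟨htors, hfin⟩ H
    have hfin' : ∀ (p : ℕ) [Fact p.Prime], {x : G | p • x = 0}.Finite := by
      intro p hp
      rw [← primary_set_eq p]
      exact hfin p
    have hall := torsion_finite_all hfin'
    apply isCoBassian_of_torsion_finite
    · intro x
      obtain ⟨n, hn, hx⟩ := isOfFinAddOrder_iff_nsmul_eq_zero.mp (htors x.1)
      refine isOfFinAddOrder_iff_nsmul_eq_zero.mpr ⟨n, hn, ?_⟩
      apply Subtype.ext
      rw [AddSubgroup.coe_nsmul, hx]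
      rfl
    · intro m hm
      have hset : {x : ↥H | m • x = 0} = (Subtype.val) ⁻¹' {g : G | m • g = 0} := by
        ext x
        simp only [Set.mem_setOf_eq, Set.mem_preimage]
        constructor
        · intro h0
          have := congrArg Subtype.val h0
          simpa using this
        · intro h0
          exact Subtype.ext (by simpa using h0)
      rw [hset]
      exact Set.Finite.preimage (Subtype.val_injective.injOn) (hall m hm)
end

section
/- An abelian group G is a torsion group with finitely cogenerated p-primary components for all primes p (i.e., T_p[p] is finite for every prime p) if and only if G has no subgroup isomorphic to ℤ and, for every prime p, no subgroup isomorphic to the countably infinite direct sum ⨁_{n ∈ ℕ} ℤ/pℤ. -/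
open scoped TensorProduct DirectSum

section Aux

variable {G : Type*} [AddCommGroup G]

/-- Subgroup of elements killed by `n`. -/
def pKer (n : ℕ) (G : Type*) [AddCommGroup G] : AddSubgroup G where
  carrier := {x | n • x = 0}
  zero_mem' := smul_zero n
  add_mem' ha hb := by simp_all [smul_add]
  neg_mem' ha := by simp_all [smul_neg]

lemma mem_pKer {n : ℕ} {x : G} : x ∈ pKer n G ↔ n • x = 0 := Iff.rfl

set_option maxHeartbeats 1000000 in
lemma exists_directSum_subgroup (p : ℕ) [hp : Fact p.Prime]
    (h : ¬ {x : G | x ∈ AddCommGroup.primaryComponent G p ∧ p • x = 0}.Finite) :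
    ∃ A : AddSubgroup G, Nonempty (A ≃+ (⨁ _ : ℕ, ZMod p)) := by
  obtain ⟨k, rfl⟩ := Nat.exists_eq_succ_of_ne_zero hp.out.ne_zero
  set p := k + 1
  set S := {x : G | x ∈ AddCommGroup.primaryComponent G p ∧ p • x = 0}
  have hps : S = (pKer p G : Set G) := by
    ext x
    constructor
    · rintro ⟨-, hx⟩; exact hx
    · intro hx
      refine ⟨?_, hx⟩
      have hd : addOrderOf x ∣ p := addOrderOf_dvd_of_nsmul_eq_zero hx
      rcases (Nat.Prime.eq_one_or_self_of_dvd hp.out _ hd) with h1 | h1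
      · exact ⟨0, by simpa using h1⟩
      · exact ⟨1, by rw [pow_one]; exact hx⟩
  have : NeZero p := ⟨hp.out.ne_zero⟩
  letI : Module (ZMod p) (pKer p G) :=
    AddCommMonoid.zmodModule (M := pKer p G) (fun x => by
      ext; exact x.2)
  have hVinf : Infinite (pKer p G) := by
    rw [hps] at h
    have := Set.infinite_coe_iff.mpr h
    exact this
  -- basis
  let b := Module.Basis.ofVectorSpace (ZMod p) (pKer p G)
  haveI : Infinite (Module.Basis.ofVectorSpaceIndex (ZMod p) (pKer p G)) := by
    by_contra hfin
    rw [not_infinite_iff_finite] at hfin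
    haveI : Module.Finite (ZMod p) (pKer p G) :=
      Module.Finite.of_basis b
    haveI : Finite (pKer p G) := Module.finite_of_finite (ZMod p)
    exact not_finite (pKer p G)
  let emb := Infinite.natEmbedding (Module.Basis.ofVectorSpaceIndex (ZMod p) (pKer p G))
  have li : LinearIndependent (ZMod p) (b ∘ emb) :=
    b.linearIndependent.comp emb emb.injective
  have hinj : Function.Injective (Finsupp.linearCombination (ZMod p) (b ∘ emb)) := li
  let ℓ : (⨁ _ : ℕ, ZMod p) →ₗ[ZMod p] (pKer p G) :=
    (Finsupp.linearCombination (ZMod p) (b ∘ emb)).comp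
      (finsuppLEquivDirectSum (ZMod p) (ZMod p) ℕ).symm.toLinearMap
  have hℓ : Function.Injective ℓ :=
    hinj.comp (finsuppLEquivDirectSum (ZMod p) (ZMod p) ℕ).symm.injective
  let f : (⨁ _ : ℕ, ZMod p) →+ G := (pKer p G).subtype.comp ℓ.toAddMonoidHom
  have hf : Function.Injective f := Subtype.coe_injective.comp hℓ
  exact ⟨f.range, ⟨(AddMonoidHom.ofInjective hf).symm⟩⟩

end Aux

/-- `G` is torsion with all `T_p[p]` finite iff `G` has no subgroup
isomorphic to `ℤ` and, for each prime `p`, no subgroup isomorphic to `⨁_{n ∈ ℕ} ℤ/pℤ`. -/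
theorem torsion_finitelyCogenerated_iff_no_subgroups (G : Type*) [AddCommGroup G] :
    (AddMonoid.IsTorsion G ∧
        ∀ (p : ℕ) [Fact p.Prime],
          {x : G | x ∈ AddCommGroup.primaryComponent G p ∧ p • x = 0}.Finite) ↔
      ((¬∃ A : AddSubgroup G, Nonempty (A ≃+ ℤ)) ∧
        ∀ (p : ℕ) [Fact p.Prime],
          ¬∃ A : AddSubgroup G, Nonempty (A ≃+ (⨁ _ : ℕ, ZMod p))) := by
  constructor
  · rintro ⟨htor, hfin⟩
    constructor
    · rintro ⟨A, ⟨e⟩⟩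
      have h1 : IsOfFinAddOrder (e.symm 1) := by
        have := htor ((e.symm 1 : A) : G)
        rwa [← addOrderOf_pos_iff, AddSubgroup.addOrderOf_coe, addOrderOf_pos_iff] at this
      have h2 : IsOfFinAddOrder (1 : ℤ) := by
        have := h1.addOrderOf_pos
        rw [← addOrderOf_injective e.toAddMonoidHom e.injective (e.symm 1)] at this
        simpa using addOrderOf_pos_iff.mp this
      rcases h2.exists_nsmul_eq_zero with ⟨n, hn, hn0⟩
      simp [nsmul_eq_mul] at hn0
      omega
    · intro p _
      rintro ⟨A, ⟨e⟩⟩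
      have hS := hfin p
      apply Set.not_infinite.mpr hS
      have : Fact p.Prime := ‹_›
      apply Set.infinite_of_injective_forall_mem
        (f := fun n : ℕ => ((e.symm (DirectSum.of (fun _ => ZMod p) n 1) : A) : G))
      · intro n m hnm
        have := e.symm.injective (Subtype.coe_injective hnm)
        by_contra hne
        have h1 := congrArg (fun d => d m) this
        simp only [DirectSum.of_eq_same, DirectSum.of_eq_of_ne _ _ _ (Ne.symm hne)] at h1
        exact one_ne_zero h1.symm
      · intro n
        set x : G := ((e.symm (DirectSum.of (fun _ => ZMod p) n 1) : A) : G)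
        have hpx : p • x = 0 := by
          have hd : ∀ d : ⨁ _ : ℕ, ZMod p, p • d = 0 := by
            intro d
            rw [← Nat.cast_smul_eq_nsmul (ZMod p), ZMod.natCast_self, zero_smul]
          have : p • (e.symm (DirectSum.of (fun _ => ZMod p) n 1)) = 0 := by
            apply e.injective
            rw [map_nsmul, e.apply_symm_apply, hd, map_zero]
          calc p • x = ((p • (e.symm (DirectSum.of (fun _ => ZMod p) n 1)) : A) : G) := rfl
            _ = 0 := by rw [this]; rfl
        refine ⟨?_, hpx⟩
        have hd : addOrderOf x ∣ p := addOrderOf_dvd_of_nsmul_eq_zero hpx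
        rcases (Nat.Prime.eq_one_or_self_of_dvd this.out _ hd) with h1 | h1
        · exact ⟨0, by simpa using h1⟩
        · exact ⟨1, by rw [pow_one]; exact hpx⟩
  · rintro ⟨hz, hsum⟩
    constructor
    · intro g
      by_contra hg
      apply hz
      refine ⟨AddSubgroup.zmultiples g, ⟨?_⟩⟩
      have hinj : Function.Injective (zmultiplesHom G g) := by
        intro n m hnm
        simp only [zmultiplesHom_apply] at hnm
        by_contra hne
        apply hg
        rw [isOfFinAddOrder_iff_zsmul_eq_zero]
        exact ⟨n - m, sub_ne_zero.mpr hne, by rw [sub_smul, hnm, sub_self]⟩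
      have hr : (zmultiplesHom G g).range = AddSubgroup.zmultiples g := by
        ext x
        simp [AddSubgroup.mem_zmultiples_iff, zmultiplesHom_apply, eq_comm]
      exact ((AddMonoidHom.ofInjective hinj).trans (AddEquiv.addSubgroupCongr hr)).symm
    · intro p _
      by_contra h
      exact hsum p (exists_directSum_subgroup p h)
end

section
/- An abelian group G is a torsion group such that (p·T_p)[p] is finite for every prime p (where T_p is the p-primary component of G) if and only if G has no subgroup isomorphic to ℤ and, for every prime p, no subgroup isomorphic to the countably infinite direct sum ⨁_{n ∈ ℕ} ℤ/p²ℤ. -/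
open scoped TensorProduct DirectSum

/-- Auxiliary: the `ZMod p` module structure, wrapped in a `def` so that instance
unification is well-behaved. -/
def auxZModModule (p : ℕ) (V : Type*) [AddCommGroup V] (hV : ∀ x : V, p • x = 0) :
    Module (ZMod p) V :=
  AddCommGroup.zmodModule hV

section Aux

variable {G : Type*} [AddCommGroup G] (p : ℕ) [Fact p.Prime]

lemma aux_directSum_of_infinite
    (h : {x : G | (∃ y ∈ AddCommGroup.primaryComponent G p, p • y = x) ∧ p • x = 0}.Infinite) :
    ∃ A : AddSubgroup G, Nonempty (A ≃+ (⨁ _ : ℕ, ZMod (p ^ 2))) := by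
  classical
  have hp : p.Prime := Fact.out
  haveI : NeZero (p ^ 2) := ⟨pow_ne_zero _ hp.ne_zero⟩
  haveI : NeZero p := ⟨hp.ne_zero⟩
  set S : Set G := {x : G | (∃ y ∈ AddCommGroup.primaryComponent G p, p • y = x) ∧ p • x = 0}
    with hS
  let Ssub : AddSubgroup G :=
    { carrier := S
      zero_mem' := ⟨⟨0, zero_mem _, smul_zero _⟩, smul_zero _⟩
      add_mem' := by
        rintro a b ⟨⟨y, hy, hya⟩, ha⟩ ⟨⟨z, hz, hzb⟩, hb⟩
        exact ⟨⟨y + z, add_mem hy hz, by rw [smul_add, hya, hzb]⟩,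
          by rw [smul_add, ha, hb, add_zero]⟩
      neg_mem' := by
        rintro a ⟨⟨y, hy, hya⟩, ha⟩
        exact ⟨⟨-y, neg_mem hy, by rw [smul_neg, hya]⟩, by rw [smul_neg, ha, neg_zero]⟩ }
  letI : Module (ZMod p) Ssub := auxZModModule p Ssub (fun x => by
    ext
    exact x.2.2)
  haveI : Infinite Ssub := h.to_subtype
  let b := Module.Basis.ofVectorSpace (ZMod p) Ssub
  haveI : Infinite (Module.Basis.ofVectorSpaceIndex (ZMod p) Ssub) := by
    rw [← not_finite_iff_infinite]
    intro hfin
    haveI : Fintype (Module.Basis.ofVectorSpaceIndex (ZMod p) Ssub) := Fintype.ofFinite _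
    haveI := Module.fintypeOfFintype b
    exact (not_finite Ssub)
  let emb : ℕ ↪ Module.Basis.ofVectorSpaceIndex (ZMod p) Ssub := Infinite.natEmbedding _
  let X : ℕ → Ssub := fun n => b (emb n)
  have li : LinearIndependent (ZMod p) X := b.linearIndependent.comp emb emb.injective
  -- key independence statement over ℕ coefficients, in G
  have key : ∀ (t : Finset ℕ) (g : ℕ → ℕ),
      (∑ n ∈ t, g n • (X n : G)) = 0 → ∀ n ∈ t, ((g n : ZMod p)) = 0 := by
    intro t g hsum n hn
    have h2 : ((∑ n ∈ t, g n • X n : Ssub) : G) = 0 := by push_cast; exact hsum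
    have h1 : (∑ n ∈ t, g n • X n : Ssub) = 0 :=
      Subtype.coe_injective (h2.trans (ZeroMemClass.coe_zero Ssub).symm)
    have h0 : (∑ n ∈ t, (g n : ZMod p) • X n) = 0 := by
      rw [← h1]
      exact Finset.sum_congr rfl fun n _ => Nat.cast_smul_eq_nsmul (ZMod p) _ _
    exact linearIndependent_iff'.mp li t (fun n => (g n : ZMod p)) h0 n hn
  -- choose lifts y n with p • y n = X n
  have hmem : ∀ n, (∃ y ∈ AddCommGroup.primaryComponent G p, p • y = (X n : G)) ∧
      p • (X n : G) = 0 := fun n => (X n).2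
  choose y hyT hyp using fun n => (hmem n).1
  have p2y : ∀ n, (p ^ 2) • y n = 0 := by
    intro n
    rw [pow_two, mul_comm, mul_smul, hyp n]
    exact (hmem n).2
  -- the homomorphisms ZMod p² →+ G
  have hzp : ∀ n, (zmultiplesHom G (y n)) ((p ^ 2 : ℕ) : ℤ) = 0 := by
    intro n
    show ((p ^ 2 : ℕ) : ℤ) • y n = 0
    rw [natCast_zsmul, p2y n]
  let F : ∀ _ : ℕ, ZMod (p ^ 2) →+ G := fun n =>
    ZMod.lift (p ^ 2) ⟨zmultiplesHom G (y n), by push_cast at hzp ⊢; exact hzp n⟩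
  have Flem : ∀ n (a : ZMod (p ^ 2)), F n a = a.val • y n := by
    intro n a
    show ZMod.lift (p ^ 2) _ a = _
    conv_lhs => rw [← ZMod.natCast_zmod_val a,
      show ((a.val : ℕ) : ZMod (p ^ 2)) = ((a.val : ℤ) : ZMod (p ^ 2)) by push_cast; rfl]
    rw [ZMod.lift_coe]
    show (a.val : ℤ) • y n = _
    rw [natCast_zsmul]
  let φ : (⨁ _ : ℕ, ZMod (p ^ 2)) →+ G := DirectSum.toAddMonoid F
  have hinj : Function.Injective φ := by
    rw [injective_iff_map_eq_zero]
    intro z hz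
    have hrep : φ z = ∑ n ∈ DFinsupp.support z, (z n).val • y n := by
      conv_lhs => rw [← DirectSum.sum_support_of z]
      rw [map_sum]
      exact Finset.sum_congr rfl fun n _ => by
        rw [DirectSum.toAddMonoid_of]; exact Flem n (z n)
    have h1 : ∑ n ∈ DFinsupp.support z, (z n).val • y n = 0 := by rw [← hrep]; exact hz
    have h2 : ∑ n ∈ DFinsupp.support z, (z n).val • (X n : G) = 0 := by
      have : ∑ n ∈ DFinsupp.support z, (z n).val • (X n : G)
          = p • ∑ n ∈ DFinsupp.support z, (z n).val • y n := by
        rw [Finset.smul_sum]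
        refine Finset.sum_congr rfl fun n _ => ?_
        rw [← hyp n, smul_smul, smul_smul, mul_comm]
      rw [this, h1, smul_zero]
    have dvd1 : ∀ n ∈ DFinsupp.support z, p ∣ (z n).val := fun n hn =>
      (ZMod.natCast_eq_zero_iff _ _).mp
        (key (DFinsupp.support z) (fun n => (z n).val) h2 n hn)
    have h3 : ∑ n ∈ DFinsupp.support z, ((z n).val / p) • (X n : G) = 0 := by
      have : ∑ n ∈ DFinsupp.support z, ((z n).val / p) • (X n : G)
          = ∑ n ∈ DFinsupp.support z, (z n).val • y n := by
        refine Finset.sum_congr rfl fun n hn => ?_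
        rw [← hyp n, smul_smul, Nat.div_mul_cancel (dvd1 n hn)]
      rw [this, h1]
    have dvd2 : ∀ n ∈ DFinsupp.support z, p ^ 2 ∣ (z n).val := by
      intro n hn
      have hdp : p ∣ (z n).val / p :=
        (ZMod.natCast_eq_zero_iff _ _).mp
          (key (DFinsupp.support z) (fun n => (z n).val / p) h3 n hn)
      obtain ⟨c, hc⟩ := dvd1 n hn
      have hvc : (z n).val / p = c := by rw [hc]; exact Nat.mul_div_cancel_left c hp.pos
      rw [hvc] at hdp
      obtain ⟨d, hd⟩ := hdp
      exact ⟨d, by rw [hc, hd]; ring⟩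
    refine DFinsupp.ext fun n => ?_
    by_cases hn : n ∈ DFinsupp.support z
    · exact (ZMod.val_eq_zero (z n)).mp (Nat.eq_zero_of_dvd_of_lt (dvd2 n hn) (ZMod.val_lt (z n)))
    · exact DFinsupp.notMem_support_iff.mp hn
  exact ⟨φ.range, ⟨(AddMonoidHom.ofInjective hinj).symm⟩⟩

end Aux

/-- `G` is torsion with all `(p·T_p)[p]` finite iff `G` has no subgroup
isomorphic to `ℤ` and, for each prime `p`, no subgroup isomorphic to `⨁_{n ∈ ℕ} ℤ/p²ℤ`. -/
theorem torsion_pTp_finite_iff_no_subgroups (G : Type*) [AddCommGroup G] :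
    (AddMonoid.IsTorsion G ∧
        ∀ (p : ℕ) [Fact p.Prime],
          {x : G | (∃ y ∈ AddCommGroup.primaryComponent G p, p • y = x) ∧
            p • x = 0}.Finite) ↔
      ((¬∃ A : AddSubgroup G, Nonempty (A ≃+ ℤ)) ∧
        ∀ (p : ℕ) [Fact p.Prime],
          ¬∃ A : AddSubgroup G, Nonempty (A ≃+ (⨁ _ : ℕ, ZMod (p ^ 2)))) := by
  constructor
  · rintro ⟨htors, hfin⟩
    constructor
    · rintro ⟨A, ⟨e⟩⟩
      set a : A := e.symm 1 with ha
      obtain ⟨n, hn0, hn⟩ := isOfFinAddOrder_iff_nsmul_eq_zero.mp (htors (a : G))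
      have h0 : n • a = 0 := Subtype.ext (by push_cast; exact hn)
      have h1 := congrArg e h0
      rw [map_nsmul, map_zero, ha, AddEquiv.apply_symm_apply] at h1
      have h2 : (n : ℤ) = 0 := by simpa using h1
      exact hn0.ne' (by exact_mod_cast h2)
    · intro p hfact
      rintro ⟨A, ⟨e⟩⟩
      have hp : p.Prime := Fact.out
      haveI : NeZero (p ^ 2) := ⟨pow_ne_zero _ hp.ne_zero⟩
      classical
      set a : ℕ → A := fun n => e.symm (DirectSum.of (fun _ : ℕ => ZMod (p ^ 2)) n 1) with haa
      have hsm1 : ((p ^ 2 : ℕ)) • (1 : ZMod (p ^ 2)) = 0 := by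
        simp [nsmul_eq_mul, ZMod.natCast_self]
      have hp2 : ∀ n, (p ^ 2 : ℕ) • (a n : G) = 0 := by
        intro n
        have : (p ^ 2 : ℕ) • a n = 0 := by
          rw [haa]
          rw [← map_nsmul, ← map_nsmul, hsm1, map_zero, map_zero]
        rw [← AddSubgroup.coe_nsmul, this, AddSubgroup.coe_zero]
      have hmemT : ∀ n, (a n : G) ∈ AddCommGroup.primaryComponent G p := by
        intro n
        obtain ⟨k, _, hord⟩ := (Nat.dvd_prime_pow hp).mp
          (addOrderOf_dvd_of_nsmul_eq_zero (hp2 n))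
        exact ⟨k, by rw [← hord]; exact addOrderOf_nsmul_eq_zero _⟩
      set f : ℕ → G := fun n => p • (a n : G) with hf
      have hmemS : ∀ n, f n ∈ {x : G | (∃ y ∈ AddCommGroup.primaryComponent G p, p • y = x) ∧
          p • x = 0} := by
        intro n
        refine ⟨⟨(a n : G), hmemT n, rfl⟩, ?_⟩
        rw [hf, smul_smul, ← pow_two]
        exact hp2 n
      have hinjf : Function.Injective f := by
        intro m n hmn
        by_contra hne
        have h0 : p • (a m - a n) = 0 := by
          apply Subtype.ext
          push_cast
          rw [smul_sub]
          have hmn' : p • ((a m : G)) = p • ((a n : G)) := hmn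
          rw [hmn', sub_self]
        have h1 := congrArg e h0
        rw [map_nsmul, map_sub, map_zero, haa] at h1
        simp only [AddEquiv.apply_symm_apply] at h1
        rw [smul_sub, ← map_nsmul, ← map_nsmul] at h1
        have h2 := congrArg (fun w => w m) h1
        simp only [DirectSum.sub_apply, DirectSum.zero_apply] at h2
        rw [DirectSum.of_eq_of_ne _ _ _ hne, sub_zero] at h2
        have h3 : ((p : ℕ) : ZMod (p ^ 2)) = 0 := by
          simpa [nsmul_eq_mul] using h2
        have h4 : p ^ 2 ∣ p := (ZMod.natCast_eq_zero_iff _ _).mp h3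
        have h5 := Nat.le_of_dvd hp.pos h4
        have h6 := hp.two_le
        nlinarith
      exact Set.infinite_of_injective_forall_mem hinjf hmemS (hfin p)
  · rintro ⟨hZ, hD⟩
    constructor
    · intro g
      by_contra hg
      apply hZ
      have hinj : Function.Injective (zmultiplesHom G g) := by
        rw [injective_iff_map_eq_zero]
        intro k hk
        by_contra hk0
        exact hg (isOfFinAddOrder_iff_zsmul_eq_zero.mpr ⟨k, hk0, hk⟩)
      exact ⟨(zmultiplesHom G g).range, ⟨(AddMonoidHom.ofInjective hinj).symm⟩⟩
    · intro p hfact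
      by_contra hfin
      exact hD p (aux_directSum_of_infinite p hfin)
end

section
/- For every prime p, the countably infinite direct sum ⨁_{n ∈ ℕ} ℤ/pℤ is not co-Bassian: there exist a subgroup N of G = ⨁_{n ∈ ℕ} ℤ/pℤ and an injective group homomorphism φ: G → G/N that is not surjective. -/
open scoped TensorProduct DirectSum

/-- for every prime `p`, the group `⨁_{n ∈ ℕ} ℤ/pℤ` is not co-Bassian. -/
theorem directSum_zmod_not_coBassian (p : ℕ) (hp : p.Prime) :
    ∃ N : AddSubgroup (⨁ _ : ℕ, ZMod p),
      ∃ φ : (⨁ _ : ℕ, ZMod p) →+ (⨁ _ : ℕ, ZMod p) ⧸ N,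
        Function.Injective φ ∧ ¬Function.Surjective φ := by
  haveI : Fact p.Prime := ⟨hp⟩
  set G := (⨁ _ : ℕ, ZMod p)
  -- the shift homomorphism e_n ↦ e_{n+1}
  let shift : G →+ G :=
    DirectSum.toAddMonoid fun i => DirectSum.of (fun _ : ℕ => ZMod p) (i + 1)
  -- a left inverse of shift
  let retract : G →+ G :=
    DirectSum.toAddMonoid fun i =>
      Nat.rec 0 (fun n _ => DirectSum.of (fun _ : ℕ => ZMod p) n) i
  have hretract : retract.comp shift = AddMonoidHom.id G := by
    ext i x
    simp only [AddMonoidHom.comp_apply, AddMonoidHom.id_apply]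
    rw [show shift (DirectSum.of (fun _ : ℕ => ZMod p) i x)
        = DirectSum.of (fun _ : ℕ => ZMod p) (i + 1) x from DirectSum.toAddMonoid_of _ _ _,
      show retract (DirectSum.of (fun _ : ℕ => ZMod p) (i + 1) x)
        = DirectSum.of (fun _ : ℕ => ZMod p) i x from DirectSum.toAddMonoid_of _ _ _]
    rfl
  have hshift_inj : Function.Injective shift :=
    Function.LeftInverse.injective (g := retract) fun x => by
      have := congrArg (fun f => f x) (congrArg DFunLike.coe hretract)
      simpa using this
  have hcomp0 : ∀ y : G, (shift y) 0 = 0 := by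
    intro y
    induction y using DirectSum.induction_on with
    | zero => simp
    | of i a =>
        rw [show shift (DirectSum.of (fun _ : ℕ => ZMod p) i a)
            = DirectSum.of (fun _ : ℕ => ZMod p) (i + 1) a from
          DirectSum.toAddMonoid_of _ _ _]
        rw [DirectSum.of_apply]
        simp
    | add a b ha hb =>
        rw [map_add, DirectSum.add_apply, ha, hb, add_zero]
  refine ⟨⊥, ((QuotientAddGroup.quotientBot (G := G)).symm.toAddMonoidHom).comp shift,
    ?_, ?_⟩
  · exact (QuotientAddGroup.quotientBot (G := G)).symm.injective.comp hshift_inj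
  · intro hsurj
    obtain ⟨x, hx⟩ := hsurj ((QuotientAddGroup.quotientBot (G := G)).symm
      (DirectSum.of (fun _ : ℕ => ZMod p) 0 1))
    have hx' : shift x = DirectSum.of (fun _ : ℕ => ZMod p) 0 1 :=
      (QuotientAddGroup.quotientBot (G := G)).symm.injective hx
    have h0 : (shift x) 0 = 0 := hcomp0 x
    rw [hx', DirectSum.of_eq_same] at h0
    exact one_ne_zero h0
end

section
/- For every prime p, the group G = ℤ/pℤ ⊕ (⨁_{n ∈ ℕ} ℤ/p²ℤ) is not generalized co-Bassian: there exist a subgroup N of G and an injective group homomorphism φ: G → G/N whose image is not a direct summand of G/N. -/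
open scoped TensorProduct DirectSum

section Aux

variable (p : ℕ) (hp : p.Prime)

/-- The embedding `ℤ/p → ℤ/p²`, `1 ↦ p`. -/
noncomputable def eEmb : ZMod p →+ ZMod (p ^ 2) :=
  ZMod.lift p ⟨zmultiplesHom (ZMod (p ^ 2)) (p : ZMod (p ^ 2)), by
    simp only [zmultiplesHom_apply, zsmul_eq_mul, Int.cast_natCast]
    rw [← Nat.cast_mul, ← pow_two, ZMod.natCast_self]⟩

theorem eEmb_intCast (k : ℤ) : eEmb p ((k : ℤ) : ZMod p) = k • (p : ZMod (p ^ 2)) :=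
  ZMod.lift_coe p _ k

theorem eEmb_one : eEmb p (1 : ZMod p) = (p : ZMod (p ^ 2)) := by
  have := eEmb_intCast p 1
  simpa using this

theorem p_smul_eEmb (a : ZMod p) : p • eEmb p a = 0 := by
  rw [← map_nsmul]
  have : p • a = 0 := by
    have : ((p : ℕ) : ZMod p) = 0 := ZMod.natCast_self p
    rw [nsmul_eq_mul, this, zero_mul]
  rw [this, map_zero]

theorem eEmb_injective (hp : p.Prime) : Function.Injective (eEmb p) := by
  rw [injective_iff_map_eq_zero]
  intro a ha
  haveI : NeZero p := ⟨hp.ne_zero⟩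
  have hval : (((a.val : ℤ)) : ZMod p) = a := by
    push_cast
    exact ZMod.natCast_zmod_val a
  rw [← hval, eEmb_intCast] at ha
  have h2 : ((a.val * p : ℕ) : ZMod (p ^ 2)) = 0 := by
    push_cast
    rw [← ha, zsmul_eq_mul]
    push_cast
    ring
  rw [ZMod.natCast_eq_zero_iff, pow_two] at h2
  have hdvd : p ∣ a.val := (Nat.mul_dvd_mul_iff_right hp.pos).mp (by rwa [Nat.mul_comm p p] at h2)
  have hv0 : a.val = 0 := Nat.eq_zero_of_dvd_of_lt hdvd a.val_lt
  rw [← hval, hv0]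
  simp

/-- The shift map on the direct sum. -/
noncomputable def shiftMap : (⨁ _ : ℕ, ZMod (p ^ 2)) →+ (⨁ _ : ℕ, ZMod (p ^ 2)) :=
  DirectSum.toAddMonoid fun i => DirectSum.of (fun _ : ℕ => ZMod (p ^ 2)) (i + 1)

theorem shiftMap_apply_zero (b : ⨁ _ : ℕ, ZMod (p ^ 2)) : shiftMap p b 0 = 0 := by
  induction b using DirectSum.induction_on with
  | zero => simp
  | of i x =>
      rw [shiftMap, DirectSum.toAddMonoid_of]
      exact DirectSum.of_eq_of_ne _ _ _ (by omega)
  | add x y hx hy =>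
      rw [map_add, DirectSum.add_apply, hx, hy, add_zero]

theorem shiftMap_apply_succ (b : ⨁ _ : ℕ, ZMod (p ^ 2)) (n : ℕ) :
    shiftMap p b (n + 1) = b n := by
  induction b using DirectSum.induction_on with
  | zero => simp
  | of i x =>
      rw [shiftMap, DirectSum.toAddMonoid_of]
      rcases eq_or_ne i n with rfl | h
      · rw [DirectSum.of_eq_same, DirectSum.of_eq_same]
      · rw [DirectSum.of_eq_of_ne _ _ _ (by omega), DirectSum.of_eq_of_ne _ _ _ h.symm]
  | add x y hx hy =>
      rw [map_add (shiftMap p) x y, DirectSum.add_apply, hx, hy, DirectSum.add_apply]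

/-- The injective endomorphism of `ℤ/p × ⨁ ℤ/p²`. -/
noncomputable def psiMap : (ZMod p × (⨁ _ : ℕ, ZMod (p ^ 2))) →+
    (ZMod p × (⨁ _ : ℕ, ZMod (p ^ 2))) :=
  (0 : (ZMod p × (⨁ _ : ℕ, ZMod (p ^ 2))) →+ ZMod p).prod
    (((DirectSum.of (fun _ : ℕ => ZMod (p ^ 2)) 0).comp
        ((eEmb p).comp (AddMonoidHom.fst _ _))) +
      ((shiftMap p).comp (AddMonoidHom.snd _ _)))

theorem psiMap_apply (a : ZMod p) (b : ⨁ _ : ℕ, ZMod (p ^ 2)) :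
    psiMap p (a, b) = (0, DirectSum.of (fun _ : ℕ => ZMod (p ^ 2)) 0 (eEmb p a) + shiftMap p b) :=
  rfl

theorem psiMap_injective (hp : p.Prime) : Function.Injective (psiMap p) := by
  rw [injective_iff_map_eq_zero]
  rintro ⟨a, b⟩ h
  rw [psiMap_apply, Prod.mk_eq_zero] at h
  have h2 := h.2
  have ha : a = 0 := by
    have := congrArg (fun w => w 0) h2
    simp only [DirectSum.add_apply, DirectSum.of_eq_same, shiftMap_apply_zero,
      add_zero, DirectSum.zero_apply] at this
    exact eEmb_injective p hp (by simpa using this)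
  subst ha
  rw [map_zero, map_zero, zero_add] at h2
  have hb : b = 0 := by
    refine DFinsupp.ext fun n => ?_
    have := congrArg (fun w => w (n + 1)) h2
    simpa [shiftMap_apply_succ] using this
  simp [Prod.ext_iff, hb]

/-- Evaluation at an index as an additive hom. -/
noncomputable def evalHom (n : ℕ) : (⨁ _ : ℕ, ZMod (p ^ 2)) →+ ZMod (p ^ 2) where
  toFun w := w n
  map_zero' := DirectSum.zero_apply (β := fun _ : ℕ => ZMod (p ^ 2)) n
  map_add' a b := DirectSum.add_apply a b n

theorem evalHom_apply (n : ℕ) (w : ⨁ _ : ℕ, ZMod (p ^ 2)) : evalHom p n w = w n := rfl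

end Aux

set_option maxHeartbeats 1000000 in
/-- for every prime `p`, the group `ℤ/pℤ ⊕ (⨁_{n ∈ ℕ} ℤ/p²ℤ)` is not
generalized co-Bassian. -/
theorem zmod_prod_directSum_not_genCoBassian (p : ℕ) (hp : p.Prime) :
    ∃ N : AddSubgroup (ZMod p × (⨁ _ : ℕ, ZMod (p ^ 2))),
      ∃ φ : (ZMod p × (⨁ _ : ℕ, ZMod (p ^ 2))) →+
          (ZMod p × (⨁ _ : ℕ, ZMod (p ^ 2))) ⧸ N,
        Function.Injective φ ∧ ¬IsDirectSummand φ.range := by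
  classical
  set G := ZMod p × (⨁ _ : ℕ, ZMod (p ^ 2)) with hGdef
  set π : G →+ G ⧸ (⊥ : AddSubgroup G) := QuotientAddGroup.mk' ⊥ with hπdef
  have hπ : Function.Injective π :=
    (AddMonoidHom.ker_eq_bot_iff _).mp (QuotientAddGroup.ker_mk' _)
  set φ : G →+ G ⧸ (⊥ : AddSubgroup G) := π.comp (psiMap p) with hφdef
  have hφinj : Function.Injective φ := hπ.comp (psiMap_injective p hp)
  refine ⟨⊥, φ, hφinj, ?_⟩
  rintro ⟨C, hsup, hinf⟩
  set y : G := (0, DirectSum.of (fun _ : ℕ => ZMod (p ^ 2)) 0 (1 : ZMod (p ^ 2))) with hydef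
  set x : G := (0, DirectSum.of (fun _ : ℕ => ZMod (p ^ 2)) 0 ((p : ZMod (p ^ 2)))) with hxdef
  have hsmul : ∀ (v : ⨁ _ : ℕ, ZMod (p ^ 2)),
      p • ((0, v) : G) = (0, p • v) := by
    intro v
    rw [Prod.smul_mk, smul_zero]
  have hxy : x = p • y := by
    rw [hydef, hsmul, ← map_nsmul, hxdef]
    congr 2
    rw [nsmul_eq_mul, mul_one]
  have hψ1 : psiMap p (1, 0) = x := by
    rw [psiMap_apply, map_zero, add_zero, eEmb_one]
  have hxmem : π x ∈ φ.range := ⟨(1, 0), by rw [hφdef, AddMonoidHom.comp_apply, hψ1]⟩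
  have hymem : π y ∈ φ.range ⊔ C := by rw [hsup]; exact AddSubgroup.mem_top _
  obtain ⟨h, hh, c, hc, hhc⟩ := (AddSubgroup.mem_sup (s := φ.range) (t := C) (x := π y)).mp hymem
  have hxeq : π x = p • h + p • c := by
    rw [hxy, map_nsmul, ← hhc]
    exact nsmul_add h c p
  have hmem2 : π x - p • h ∈ φ.range ⊓ C := by
    constructor
    · exact AddSubgroup.sub_mem _ hxmem (AddSubgroup.nsmul_mem _ hh p)
    · rw [hxeq, add_sub_cancel_left]
      exact AddSubgroup.nsmul_mem _ hc p
  rw [hinf, AddSubgroup.mem_bot, sub_eq_zero] at hmem2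
  obtain ⟨z, hz⟩ := hh
  rw [← hz, hφdef, AddMonoidHom.comp_apply, ← map_nsmul] at hmem2
  have hxz : x = p • psiMap p z := hπ hmem2
  obtain ⟨a, b⟩ := z
  rw [psiMap_apply, hsmul] at hxz
  have h0 := congrArg (fun w : G => evalHom p 0 w.2) hxz
  simp only [hxdef] at h0
  rw [evalHom_apply, DirectSum.of_eq_same] at h0
  have hr : (evalHom p 0) (p • (DirectSum.of (fun _ : ℕ => ZMod (p ^ 2)) 0 (eEmb p a) +
      shiftMap p b)) = 0 := by
    rw [map_nsmul, map_add]
    rw [evalHom_apply, evalHom_apply, DirectSum.of_eq_same, shiftMap_apply_zero,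
      add_zero, p_smul_eEmb]
  rw [hr] at h0
  have hdvd : p ^ 2 ∣ p := (ZMod.natCast_eq_zero_iff p (p ^ 2)).mp h0
  have hle : p ^ 2 ≤ p := Nat.le_of_dvd hp.pos hdvd
  have h2 := hp.two_le
  nlinarith [sq_nonneg p]
end

section
/- For every prime p and every integer n with 2 ≤ n, the group X = ⨁_{k ∈ ℕ} ℤ/pⁿℤ is not super generalized co-Bassian: there exists a subgroup K of X such that X/K is not generalized co-Bassian. -/
open scoped TensorProduct DirectSum

lemma isDirectSummand_map {G H : Type*} [AddCommGroup G] [AddCommGroup H] (e : G ≃+ H)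
    {A : AddSubgroup G} (h : IsDirectSummand A) :
    IsDirectSummand (A.map e.toAddMonoidHom) := by
  obtain ⟨C, hsup, hinf⟩ := h
  refine ⟨C.map e.toAddMonoidHom, ?_, ?_⟩
  · rw [← AddSubgroup.map_sup, hsup, AddSubgroup.map_top_of_surjective _ e.surjective]
  · rw [← AddSubgroup.map_inf _ _ _ e.injective, hinf, AddSubgroup.map_bot]

lemma isGenCoBassian_of_addEquiv {G H : Type*} [AddCommGroup G] [AddCommGroup H]
    (e : G ≃+ H) (hG : IsGenCoBassian G) : IsGenCoBassian H := by
  intro N' φ' hinj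
  set N : AddSubgroup G := N'.comap e.toAddMonoidHom with hN
  have he : N.map e.toAddMonoidHom = N' :=
    AddSubgroup.map_comap_eq_self_of_surjective e.surjective N'
  let c : G ⧸ N ≃+ H ⧸ N' := QuotientAddGroup.congr N N' e he
  let φ : G →+ G ⧸ N := c.symm.toAddMonoidHom.comp (φ'.comp e.toAddMonoidHom)
  have hφinj : Function.Injective φ := by
    exact c.symm.injective.comp (hinj.comp e.injective)
  have hrange : φ.range.map c.toAddMonoidHom = φ'.range := by
    ext x
    simp only [AddSubgroup.mem_map, AddMonoidHom.mem_range]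
    constructor
    · rintro ⟨y, ⟨g, rfl⟩, rfl⟩
      exact ⟨e g, by simp [φ]⟩
    · rintro ⟨h, rfl⟩
      exact ⟨φ (e.symm h), ⟨e.symm h, rfl⟩, by simp [φ]⟩
  rw [← hrange]
  exact isDirectSummand_map c (hG N φ hφinj)


section Conc

variable (p n : ℕ)

local notation "Q" => ZMod (p ^ n)
local notation "X" => ⨁ _ : ℕ, ZMod (p ^ n)

noncomputable def shiftHom : X →+ X :=
  DirectSum.toAddMonoid (fun k => DirectSum.of (fun _ : ℕ => Q) (k + 1))

noncomputable def dropHom : X →+ X :=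
  DirectSum.toAddMonoid (fun k => match k with
    | 0 => 0
    | m + 1 => DirectSum.of (fun _ : ℕ => Q) m)

noncomputable def eval0 : X →+ Q :=
  DirectSum.toAddMonoid (fun k => match k with
    | 0 => AddMonoidHom.id Q
    | _ + 1 => 0)

lemma shiftHom_of (k : ℕ) (x : Q) :
    shiftHom p n (DirectSum.of (fun _ : ℕ => Q) k x) = DirectSum.of (fun _ : ℕ => Q) (k + 1) x :=
  DirectSum.toAddMonoid_of _ _ _

lemma drop_shift (f : X) : dropHom p n (shiftHom p n f) = f := by
  have : (dropHom p n).comp (shiftHom p n) = AddMonoidHom.id _ := by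
    refine DirectSum.addHom_ext fun i x => ?_
    simp [shiftHom, dropHom, DirectSum.toAddMonoid_of]
  exact DFunLike.congr_fun this f

lemma eval0_shift (f : X) : eval0 p n (shiftHom p n f) = 0 := by
  have : (eval0 p n).comp (shiftHom p n) = 0 := by
    refine DirectSum.addHom_ext fun i x => ?_
    simp [shiftHom, eval0, DirectSum.toAddMonoid_of]
  exact DFunLike.congr_fun this f

lemma eval0_of0 (x : Q) : eval0 p n (DirectSum.of (fun _ : ℕ => Q) 0 x) = x := by
  simp [eval0, DirectSum.toAddMonoid_of]

lemma drop_of0 (x : Q) : dropHom p n (DirectSum.of (fun _ : ℕ => Q) 0 x) = 0 := by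
  simp [dropHom, DirectSum.toAddMonoid_of]

noncomputable def iotaHom (hn : 2 ≤ n) : ZMod p →+ Q :=
  ZMod.lift p ⟨zmultiplesHom Q ((p ^ (n - 1) : ℕ) : Q), by
    show ((p : ℕ) : ℤ) • ((p ^ (n - 1) : ℕ) : Q) = 0
    have h1 : ((p : ℕ) : ℤ) • ((p ^ (n - 1) : ℕ) : Q) = ((p ^ n : ℕ) : Q) := by
      rw [zsmul_eq_mul]
      push_cast
      rw [← pow_succ']
      congr 1
      omega
    rw [h1, ZMod.natCast_self]⟩

lemma iotaHom_one (hn : 2 ≤ n) : iotaHom p n hn 1 = ((p ^ (n - 1) : ℕ) : Q) := by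
  have : (1 : ZMod p) = ((1 : ℤ) : ZMod p) := by norm_cast
  rw [this, iotaHom, ZMod.lift_coe]
  simp

lemma iotaHom_injective (hp : p.Prime) (hn : 2 ≤ n) : Function.Injective (iotaHom p n hn) := by
  rw [iotaHom, ZMod.lift_injective]
  intro m hm
  simp only [zmultiplesHom_apply] at hm
  have hm' : ((m * (p ^ (n - 1) : ℕ) : ℤ) : Q) = 0 := by
    push_cast
    rw [← zsmul_eq_mul]
    exact_mod_cast hm
  rw [ZMod.intCast_zmod_eq_zero_iff_dvd] at hm' ⊢
  have hfac : ((p ^ n : ℕ) : ℤ) = (p : ℤ) * ((p ^ (n - 1) : ℕ) : ℤ) := by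
    push_cast
    rw [← pow_succ']
    congr 1
    omega
  rw [hfac] at hm'
  have hpos : ((p ^ (n - 1) : ℕ) : ℤ) ≠ 0 := by
    simp [pow_ne_zero, hp.ne_zero]
  exact (mul_dvd_mul_iff_right hpos).mp hm'

noncomputable def psiHom (hn : 2 ≤ n) : ZMod p × X →+ ZMod p × X :=
  AddMonoidHom.prod 0
    (((DirectSum.of (fun _ : ℕ => Q) 0).comp (iotaHom p n hn)).comp
        (AddMonoidHom.fst (ZMod p) X)
      + (shiftHom p n).comp (AddMonoidHom.snd (ZMod p) X))

lemma psiHom_apply (hn : 2 ≤ n) (z : ZMod p × X) :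
    psiHom p n hn z =
      (0, DirectSum.of (fun _ : ℕ => Q) 0 (iotaHom p n hn z.1) + shiftHom p n z.2) := rfl

lemma psiHom_injective (hp : p.Prime) (hn : 2 ≤ n) :
    Function.Injective (psiHom p n hn) := by
  rw [injective_iff_map_eq_zero]
  rintro ⟨a, f⟩ hz
  rw [psiHom_apply, Prod.mk_eq_zero] at hz
  have h2 := hz.2
  have ha : iotaHom p n hn a = 0 := by
    have := congrArg (eval0 p n) h2
    rwa [map_add, eval0_of0, eval0_shift, add_zero, map_zero] at this
  have ha' : a = 0 := iotaHom_injective p n hp hn (by rw [ha, map_zero])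
  have hf : f = 0 := by
    have h3 : shiftHom p n f = 0 := by
      rw [ha, map_zero, zero_add] at h2; exact h2
    have := congrArg (dropHom p n) h3
    rwa [drop_shift, map_zero] at this
  simp [ha', hf]

lemma notGenCoBassian (hp : p.Prime) (hn : 2 ≤ n) :
    ¬ IsGenCoBassian (ZMod p × X) := by
  intro hGen
  haveI : Fact p.Prime := ⟨hp⟩
  set ψ := psiHom p n hn with hψ
  have hψinj : Function.Injective ψ := psiHom_injective p n hp hn
  set φ : (ZMod p × X) →+ (ZMod p × X) ⧸ (⊥ : AddSubgroup (ZMod p × X)) :=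
    (QuotientAddGroup.mk' ⊥).comp ψ with hφ
  have hmkinj : Function.Injective (QuotientAddGroup.mk' (⊥ : AddSubgroup (ZMod p × X))) :=
    (AddMonoidHom.ker_eq_bot_iff _).mp (QuotientAddGroup.ker_mk' ⊥)
  have hφinj : Function.Injective φ := hmkinj.comp hψinj
  obtain ⟨C, hsup, hinf⟩ := hGen ⊥ φ hφinj
  set y : (ZMod p × X) ⧸ (⊥ : AddSubgroup (ZMod p × X)) :=
    QuotientAddGroup.mk' ⊥ (0, DirectSum.of (fun _ : ℕ => Q) 0 1) with hy
  have hymem : y ∈ φ.range ⊔ C := by rw [hsup]; exact AddSubgroup.mem_top y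
  rw [@AddSubgroup.mem_sup _ (QuotientAddGroup.Quotient.addCommGroup _)] at hymem
  obtain ⟨a, ha, c, hc, hac⟩ := hymem
  have hu : p ^ (n - 1) • y = φ (1, 0) := by
    rw [hy, ← map_nsmul, hφ, AddMonoidHom.comp_apply]
    congr 1
    rw [psiHom_apply, map_zero, add_zero, iotaHom_one p n hn, Prod.smul_mk, smul_zero,
      ← map_nsmul]
    congr 1
    rw [nsmul_eq_mul, mul_one]
  have hca : p ^ (n - 1) • c ∈ φ.range ⊓ C := by
    constructor
    · have : p ^ (n - 1) • c = φ (1, 0) - p ^ (n - 1) • a := by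
        rw [← hu, ← hac, @nsmul_add _ (QuotientAddGroup.Quotient.addCommGroup _).toAddCommMonoid]; abel
      rw [this]
      exact AddSubgroup.sub_mem _ (⟨(1, 0), rfl⟩) (AddSubgroup.nsmul_mem _ ha _)
    · exact AddSubgroup.nsmul_mem _ hc _
  rw [hinf, AddSubgroup.mem_bot] at hca
  have hfa : φ (1, 0) = p ^ (n - 1) • a := by
    rw [← hu, ← hac, @nsmul_add _ (QuotientAddGroup.Quotient.addCommGroup _).toAddCommMonoid, hca, add_zero]
  obtain ⟨b, rfl⟩ := ha
  rw [← map_nsmul] at hfa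
  have hb := hφinj hfa
  have h1 : (1 : ZMod p) = p ^ (n - 1) • b.1 := congrArg Prod.fst hb
  have h0 : p ^ (n - 1) • b.1 = 0 := by
    rw [nsmul_eq_mul]
    have : ((p ^ (n - 1) : ℕ) : ZMod p) = 0 := by
      push_cast
      rw [ZMod.natCast_self, zero_pow (by omega : n - 1 ≠ 0)]
    rw [this, zero_mul]
  rw [h0] at h1
  exact one_ne_zero h1

noncomputable def piHom (hn : 2 ≤ n) : X →+ ZMod p × X :=
  ((ZMod.castHom (dvd_pow_self p (by omega : n ≠ 0)) (ZMod p)).toAddMonoidHom.comp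
      (eval0 p n)).prod (dropHom p n)

lemma piHom_surjective (hp : p.Prime) (hn : 2 ≤ n) :
    Function.Surjective (piHom p n hn) := by
  haveI : Fact p.Prime := ⟨hp⟩
  rintro ⟨a, f⟩
  refine ⟨DirectSum.of (fun _ : ℕ => Q) 0 ((a.val : Q)) + shiftHom p n f, ?_⟩
  have h1 : eval0 p n (DirectSum.of (fun _ : ℕ => Q) 0 ((a.val : Q)) + shiftHom p n f)
      = (a.val : Q) := by
    rw [map_add, eval0_of0, eval0_shift, add_zero]
  have h2 : dropHom p n (DirectSum.of (fun _ : ℕ => Q) 0 ((a.val : Q)) + shiftHom p n f)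
      = f := by
    rw [map_add, drop_of0, drop_shift, zero_add]
  have : piHom p n hn (DirectSum.of (fun _ : ℕ => Q) 0 ((a.val : Q)) + shiftHom p n f)
      = ((ZMod.castHom (dvd_pow_self p (by omega : n ≠ 0)) (ZMod p)) ((a.val : Q)),
         f) := by
    rw [piHom, AddMonoidHom.prod_apply, h2, AddMonoidHom.comp_apply, h1]; rfl
  rw [this]
  ext
  · simp [map_natCast, ZMod.natCast_rightInverse a]
  · rfl

end Conc

/-- for every prime `p` and `n ≥ 2`, the group `X = ⨁_{k ∈ ℕ} ℤ/pⁿℤ` is not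
super generalized co-Bassian. -/
theorem directSum_not_superGenCoBassian (p : ℕ) (hp : p.Prime) (n : ℕ) (hn : 2 ≤ n) :
    ∃ K : AddSubgroup (⨁ _ : ℕ, ZMod (p ^ n)),
      ¬IsGenCoBassian ((⨁ _ : ℕ, ZMod (p ^ n)) ⧸ K) := by
  refine ⟨(piHom p n hn).ker, fun h => notGenCoBassian p n hp hn ?_⟩
  exact isGenCoBassian_of_addEquiv
    (QuotientAddGroup.quotientKerEquivOfSurjective _ (piHom_surjective p n hp hn)) h
end
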